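/- Let A, B be polynomials over ℂ, let z₁, …, zₙ be pairwise distinct complex numbers with B(zⱼ) ≠ 0 for every j, and set P(X) = ∏_{j=1}^n (X − zⱼ). If the Stieltjes–Bethe equations hold, i.e. for every j = 1, …, n, Σ_{ℓ ≠ j} 1/(zⱼ − z_ℓ) = A(zⱼ)/(2·B(zⱼ)), then P divides B·P'' − A·P': there exists a polynomial Q over ℂ with B·P'' − A·P' = Q·P, and moreover deg Q ≤ d − 1 where d = max(deg A, deg B − 1). -/

import Mathlib

open Polynomial Finset

private lemma derivative_finset_prod {ι : Type*} [DecidableEq ι] (s : Finset ι)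
    (f : ι → Polynomial ℂ) :
    derivative (∏ i ∈ s, f i) = ∑ i ∈ s, (∏ j ∈ s.erase i, f j) * derivative (f i) := by
  induction s using Finset.induction with
  | empty => simp
  | @insert a s ha ih =>
    rw [Finset.prod_insert ha, derivative_mul, ih, Finset.sum_insert ha,
      Finset.erase_insert ha]
    have key : ∑ x ∈ s, (∏ j ∈ (insert a s).erase x, f j) * derivative (f x)
        = ∑ x ∈ s, f a * ((∏ j ∈ s.erase x, f j) * derivative (f x)) :=
      Finset.sum_congr rfl fun b hb => by
        rw [Finset.erase_insert_of_ne (show a ≠ b from fun h => ha (h ▸ hb)),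
          Finset.prod_insert (fun h => ha (Finset.mem_of_mem_erase h))]; ring
    rw [key, Finset.mul_sum]
    ring

/-- If pairwise distinct points `zⱼ` (not roots of `B`) satisfy the
Stieltjes–Bethe equations for `(A, B)`, then `P = ∏ (X - zⱼ)` divides `B·P′′ − A·P′`,
with quotient `Q` of degree ≤ d − 1 (i.e. `deg Q < d`), where
`d = max (deg A) (deg B − 1)`. -/
theorem heine_stieltjes_of_stieltjes_bethe
    (A B : Polynomial ℂ) (n : ℕ) (z : Fin n → ℂ)
    (hz : Function.Injective z) (hB : ∀ j, B.eval (z j) ≠ 0)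
    (P : Polynomial ℂ) (hP : P = ∏ j, (X - C (z j)))
    (hSB : ∀ j, ∑ ℓ ∈ univ.erase j, 1 / (z j - z ℓ) = A.eval (z j) / (2 * B.eval (z j))) :
    ∃ Q : Polynomial ℂ,
      B * derivative (derivative P) - A * derivative P = Q * P ∧
      Q.degree < ((max A.natDegree (B.natDegree - 1) : ℕ) : WithBot ℕ) := by
  set d := max A.natDegree (B.natDegree - 1) with hd
  set F := B * derivative (derivative P) - A * derivative P with hF
  have hPne : P ≠ 0 := by
    rw [hP]; exact prod_ne_zero_iff.mpr (fun j _ => X_sub_C_ne_zero _)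
  have hPdeg : P.natDegree = n := by
    rw [hP, natDegree_prod _ _ (fun j _ => X_sub_C_ne_zero _)]
    simp
  have hroot : ∀ j, F.eval (z j) = 0 := by
    intro j
    set R : Polynomial ℂ := ∏ ℓ ∈ univ.erase j, (X - C (z ℓ)) with hR
    have hPfac : P = (X - C (z j)) * R := by
      rw [hP, hR, ← Finset.mul_prod_erase _ _ (mem_univ j)]
    have hd1 : derivative P = R + (X - C (z j)) * derivative R := by
      rw [hPfac]; simp [derivative_mul]
    have hd2 : derivative (derivative P)
        = 2 * derivative R + (X - C (z j)) * derivative (derivative R) := by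
      rw [hd1]; simp [derivative_mul]; ring
    have hRval : R.eval (z j) = ∏ ℓ ∈ univ.erase j, (z j - z ℓ) := by
      simp [hR, eval_prod]
    have hne : ∀ ℓ ∈ univ.erase j, z j - z ℓ ≠ 0 := by
      intro ℓ hℓ
      exact sub_ne_zero.mpr fun h => (mem_erase.mp hℓ).1 (hz h.symm)
    have hR'val : (derivative R).eval (z j)
        = R.eval (z j) * ∑ ℓ ∈ univ.erase j, 1 / (z j - z ℓ) := by
      rw [hR, derivative_finset_prod, eval_finset_sum, Finset.mul_sum]
      refine Finset.sum_congr rfl fun ℓ hℓ => ?_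
      rw [hRval, ← Finset.mul_prod_erase _ _ hℓ]
      have h0 := hne ℓ hℓ
      simp [eval_prod]
      field_simp
    have e1 : (derivative P).eval (z j) = R.eval (z j) := by
      simp [hd1]
    have e2 : (derivative (derivative P)).eval (z j) = 2 * (derivative R).eval (z j) := by
      simp [hd2]
    have hB' := hB j
    rw [hF]
    simp only [eval_sub, eval_mul, e1, e2, hR'val, hSB j]
    field_simp
    ring
  have hdvd : P ∣ F := by
    rw [hP]
    refine Finset.prod_dvd_of_coprime ((pairwise_coprime_X_sub_C hz).set_pairwise _)
      (fun j _ => dvd_iff_isRoot.mpr (hroot j))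
  obtain ⟨Q, hQ⟩ := hdvd
  refine ⟨Q, by rw [hQ, mul_comm], ?_⟩
  by_cases hQ0 : Q = 0
  · simp [hQ0]
  · have hFne : F ≠ 0 := by
      rw [hQ]; exact mul_ne_zero hPne hQ0
    have hP' : derivative P ≠ 0 := by
      intro h
      apply hFne
      rw [hF, h]
      simp
    have hn1 : 1 ≤ n := by
      by_contra h
      push_neg at h
      interval_cases n
      apply hP'
      have : P.natDegree = 0 := hPdeg
      rw [Polynomial.eq_C_of_natDegree_eq_zero this]
      simp
    have hdB : B.natDegree ≤ d + 1 := by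
      have := le_max_right A.natDegree (B.natDegree - 1)
      omega
    have t1 : (B * derivative (derivative P)).natDegree < d + n := by
      by_cases h0 : B * derivative (derivative P) = 0
      · rw [h0]; simp; omega
      · have hB0 : B ≠ 0 := fun h => h0 (by rw [h]; simp)
        have hP'' : derivative (derivative P) ≠ 0 := fun h => h0 (by rw [h]; simp)
        have hP'deg : (derivative P).natDegree ≤ n - 1 := by
          have := natDegree_derivative_le P
          omega
        have hP'pos : 1 ≤ (derivative P).natDegree := by
          by_contra h
          push_neg at h
          apply hP''
          rw [Polynomial.eq_C_of_natDegree_eq_zero (by omega : (derivative P).natDegree = 0)]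
          simp
        have hP''deg : (derivative (derivative P)).natDegree ≤ n - 2 := by
          have := natDegree_derivative_le (derivative P)
          omega
        rw [natDegree_mul hB0 hP'']
        omega
    have t2 : (A * derivative P).natDegree < d + n := by
      by_cases h0 : A * derivative P = 0
      · rw [h0]; simp; omega
      · have hA0 : A ≠ 0 := fun h => h0 (by rw [h]; simp)
        have hP'deg : (derivative P).natDegree ≤ n - 1 := by
          have := natDegree_derivative_le P
          omega
        have hdA : A.natDegree ≤ d := le_max_left _ _
        rw [natDegree_mul hA0 hP']
        omega
    have hFdeg : F.natDegree < d + n := by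
      have := natDegree_sub_le (B * derivative (derivative P)) (A * derivative P)
      rw [← hF] at this
      omega
    have hQdeg : Q.natDegree < d := by
      rw [hQ, natDegree_mul hPne hQ0, hPdeg] at hFdeg
      omega
    exact (natDegree_lt_iff_degree_lt hQ0).mp hQdeg
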